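/- Let c > 0 and let V be the Volterra operator on L²[0,1], (Vf)(t) = ∫₀ᵗ f(s) ds. Then ‖(I + cV)f‖ ≥ ‖f‖ for every f ∈ L²[0,1]; consequently I + cV is invertible and (I + cV)^{−1} is a contraction (‖(I + cV)^{−1}‖ ≤ 1). -/

import Mathlib

open MeasureTheory Filter Topology

local notation "μ01" => (MeasureTheory.volume.restrict (Set.Icc (0:ℝ) 1))

open ComplexConjugate

lemma volterra_re_inner_nonneg {𝕜 : Type*} [RCLike 𝕜]
    (V : Lp 𝕜 2 μ01 →L[𝕜] Lp 𝕜 2 μ01)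
    (hV : ∀ f : Lp 𝕜 2 μ01, V f =ᵐ[μ01] fun t => ∫ s in Set.Ioc (0:ℝ) t, f s ∂μ01)
    (f : Lp 𝕜 2 μ01) : 0 ≤ RCLike.re (inner 𝕜 (V f) f : 𝕜) := by
  classical
  set g : ℝ → 𝕜 := ⇑f with hgdef
  have hgi : Integrable g μ01 := (Lp.memLp f).integrable (by norm_num)
  have hconj : Integrable (fun x => conj (g x)) μ01 :=
    ⟨RCLike.continuous_conj.comp_aestronglyMeasurable hgi.1,
     by simpa [MeasureTheory.HasFiniteIntegral] using hgi.2⟩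
  set F : ℝ → 𝕜 := fun t => ∫ s in Set.Ioc (0:ℝ) t, g s ∂μ01 with hF
  set A : Set (ℝ × ℝ) := {p | 0 < p.2 ∧ p.2 ≤ p.1} with hA
  set A' : Set (ℝ × ℝ) := {p | 0 < p.1 ∧ p.1 ≤ p.2} with hA'
  have hAm : MeasurableSet A :=
    (measurableSet_lt measurable_const measurable_snd).inter
      (measurableSet_le measurable_snd measurable_fst)
  have hA'm : MeasurableSet A' :=
    (measurableSet_lt measurable_const measurable_fst).inter
      (measurableSet_le measurable_fst measurable_snd)
  set H : ℝ × ℝ → 𝕜 := fun z => g z.1 * conj (g z.2) with hH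
  set H' : ℝ × ℝ → 𝕜 := fun z => conj (g z.1) * g z.2 with hH'
  have hHint : Integrable H (Measure.prod μ01 μ01) := hgi.mul_prod hconj
  have hH'int : Integrable H' (Measure.prod μ01 μ01) := hconj.mul_prod hgi
  have hS1 : (inner 𝕜 (V f) f : 𝕜) = ∫ z, A.indicator H z ∂(Measure.prod μ01 μ01) := by
    rw [MeasureTheory.L2.inner_def]
    have e1 : ∫ a, (inner 𝕜 ((V f : ℝ → 𝕜) a) (g a) : 𝕜) ∂μ01
        = ∫ t, conj (F t) * g t ∂μ01 := by
      refine integral_congr_ae ?_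
      filter_upwards [hV f] with t ht
      rw [RCLike.inner_apply, ht]; exact mul_comm _ _
    rw [e1]
    calc ∫ t, conj (F t) * g t ∂μ01
        = ∫ t, ∫ s, A.indicator H (t, s) ∂μ01 ∂μ01 := by
          refine integral_congr_ae (Eventually.of_forall fun t => ?_)
          have heq : ∀ s, A.indicator H (t, s)
              = (Set.Ioc (0:ℝ) t).indicator (fun s => g t * conj (g s)) s := by
            intro s
            by_cases hs : 0 < s ∧ s ≤ t <;>
              simp [hA, hH, Set.indicator_apply, Set.mem_Ioc, hs]
          simp_rw [heq]
          rw [integral_indicator measurableSet_Ioc, integral_const_mul, integral_conj]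
          ring
      _ = ∫ z, A.indicator H z ∂(Measure.prod μ01 μ01) := integral_integral (hHint.indicator hAm)
  have hS2 : (inner 𝕜 f (V f) : 𝕜) = ∫ z, A'.indicator H z ∂(Measure.prod μ01 μ01) := by
    rw [MeasureTheory.L2.inner_def]
    have e1 : ∫ a, (inner 𝕜 (g a) ((V f : ℝ → 𝕜) a) : 𝕜) ∂μ01
        = ∫ t, conj (g t) * F t ∂μ01 := by
      refine integral_congr_ae ?_
      filter_upwards [hV f] with t ht
      rw [RCLike.inner_apply, ht]; exact mul_comm _ _
    rw [e1]
    calc ∫ t, conj (g t) * F t ∂μ01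
        = ∫ t, ∫ s, A.indicator H' (t, s) ∂μ01 ∂μ01 := by
          refine integral_congr_ae (Eventually.of_forall fun t => ?_)
          have heq : ∀ s, A.indicator H' (t, s)
              = (Set.Ioc (0:ℝ) t).indicator (fun s => conj (g t) * g s) s := by
            intro s
            by_cases hs : 0 < s ∧ s ≤ t <;>
              simp [hA, hH', Set.indicator_apply, Set.mem_Ioc, hs]
          simp_rw [heq]
          rw [integral_indicator measurableSet_Ioc, integral_const_mul]
      _ = ∫ z, A.indicator H' z ∂(Measure.prod μ01 μ01) := integral_integral (hH'int.indicator hAm)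
      _ = ∫ z, (fun z => A.indicator H' z) (Prod.swap z) ∂(Measure.prod μ01 μ01) := by
          rw [integral_prod_swap]
      _ = ∫ z, A'.indicator H z ∂(Measure.prod μ01 μ01) := by
          refine integral_congr_ae (Eventually.of_forall fun z => ?_)
          by_cases hz : 0 < z.1 ∧ z.1 ≤ z.2 <;>
            simp [hA, hA', hH, hH', Set.indicator_apply, Prod.swap, hz, mul_comm]
  have hIic : μ01 (Set.Iic (0:ℝ)) = 0 := by
    rw [Measure.restrict_apply measurableSet_Iic]
    refine measure_mono_null (fun x hx => ?_) (measure_singleton (0:ℝ))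
    exact Set.mem_singleton_iff.mpr (le_antisymm hx.1 hx.2.1)
  have h1 : ∀ᵐ z : ℝ × ℝ ∂(Measure.prod μ01 μ01), 0 < z.1 := by
    rw [ae_iff]
    refine measure_mono_null (t := Set.Iic (0:ℝ) ×ˢ (Set.univ : Set ℝ))
      (fun z hz => ⟨not_lt.mp hz, Set.mem_univ _⟩) ?_
    rw [Measure.prod_prod, hIic, zero_mul]
  have h2 : ∀ᵐ z : ℝ × ℝ ∂(Measure.prod μ01 μ01), 0 < z.2 := by
    rw [ae_iff]
    refine measure_mono_null (t := (Set.univ : Set ℝ) ×ˢ Set.Iic (0:ℝ))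
      (fun z hz => ⟨Set.mem_univ _, not_lt.mp hz⟩) ?_
    rw [Measure.prod_prod, hIic, mul_zero]
  have h3 : ∀ᵐ z : ℝ × ℝ ∂(Measure.prod μ01 μ01), z.1 ≠ z.2 := by
    rw [ae_iff]
    have hD : MeasurableSet {z : ℝ × ℝ | z.1 = z.2} :=
      measurableSet_eq_fun measurable_fst measurable_snd
    have hset : {z : ℝ × ℝ | ¬ z.1 ≠ z.2} = {z : ℝ × ℝ | z.1 = z.2} := by simp
    rw [hset, Measure.prod_apply hD]
    have hfib : ∀ x : ℝ, μ01 (Prod.mk x ⁻¹' {z : ℝ × ℝ | z.1 = z.2}) = 0 := by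
      intro x
      have : Prod.mk x ⁻¹' {z : ℝ × ℝ | z.1 = z.2} = {x} := by
        ext y; simp [eq_comm]
      rw [this]; exact measure_singleton x
    simp [hfib]
  have hsum : (inner 𝕜 (V f) f : 𝕜) + (inner 𝕜 f (V f) : 𝕜)
      = (∫ x, g x ∂μ01) * conj (∫ x, g x ∂μ01) := by
    rw [hS1, hS2, ← integral_add (hHint.indicator hAm) (hHint.indicator hA'm)]
    have e2 : ∫ z, (A.indicator H z + A'.indicator H z) ∂(Measure.prod μ01 μ01)
        = ∫ z, H z ∂(Measure.prod μ01 μ01) := by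
      refine integral_congr_ae ?_
      filter_upwards [h1, h2, h3] with z hz1 hz2 hz3
      rcases le_or_gt z.2 z.1 with h | h
      · have hmem : z ∈ A := ⟨hz2, h⟩
        have hnmem : z ∉ A' := fun hh => hz3 (le_antisymm hh.2 h)
        simp [Set.indicator_of_mem hmem, Set.indicator_of_notMem hnmem]
      · have hnmem : z ∉ A := fun hh => absurd hh.2 (not_le.mpr h)
        have hmem : z ∈ A' := ⟨hz1, h.le⟩
        simp [Set.indicator_of_notMem hnmem, Set.indicator_of_mem hmem]
    rw [e2]
    have e3 : ∫ z, H z ∂(Measure.prod μ01 μ01)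
        = (∫ x, g x ∂μ01) * ∫ x, conj (g x) ∂μ01 :=
      integral_prod_mul g (fun x => conj (g x))
    rw [e3, integral_conj]
  have hre2 : RCLike.re ((inner 𝕜 (V f) f : 𝕜) + inner 𝕜 f (V f))
      = ‖∫ x, g x ∂μ01‖ ^ 2 := by
    rw [hsum, RCLike.mul_conj]
    rw [← RCLike.ofReal_pow, RCLike.ofReal_re]
  have hsym : RCLike.re (inner 𝕜 (V f) f : 𝕜) = RCLike.re (inner 𝕜 f (V f) : 𝕜) :=
    inner_re_symm _ _
  rw [map_add, ← hsym] at hre2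
  nlinarith [sq_nonneg ‖∫ x, g x ∂μ01‖]

theorem id_add_volterra_expansive_and_inverse_contraction
    {𝕜 : Type*} [RCLike 𝕜] (c : ℝ) (hc : 0 < c)
    (V : Lp 𝕜 2 μ01 →L[𝕜] Lp 𝕜 2 μ01)
    (hV : ∀ f : Lp 𝕜 2 μ01, V f =ᵐ[μ01] fun t => ∫ s in Set.Ioc (0:ℝ) t, f s ∂μ01) :
    (∀ f : Lp 𝕜 2 μ01, ‖f‖ ≤ ‖(1 + (c : 𝕜) • V) f‖) ∧
    ∃ W : Lp 𝕜 2 μ01 →L[𝕜] Lp 𝕜 2 μ01,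
      W * (1 + (c : 𝕜) • V) = 1 ∧ (1 + (c : 𝕜) • V) * W = 1 ∧ ‖W‖ ≤ 1 := by
  have hkey : ∀ f : Lp 𝕜 2 μ01, 0 ≤ RCLike.re (inner 𝕜 (V f) f : 𝕜) :=
    volterra_re_inner_nonneg V hV
  set T : Lp 𝕜 2 μ01 →L[𝕜] Lp 𝕜 2 μ01 := 1 + (c : 𝕜) • V with hT
  have hTapp : ∀ f, T f = f + (c : 𝕜) • V f := fun f => by
    simp [hT, ContinuousLinearMap.add_apply]
  have part1 : ∀ f : Lp 𝕜 2 μ01, ‖f‖ ≤ ‖T f‖ := by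
    intro f
    have h2 : ‖T f‖ ^ 2
        = ‖f‖ ^ 2 + 2 * RCLike.re (inner 𝕜 f ((c : 𝕜) • V f) : 𝕜) + ‖(c : 𝕜) • V f‖ ^ 2 := by
      rw [hTapp]; exact norm_add_sq _ _
    have h3 : 0 ≤ RCLike.re (inner 𝕜 f ((c : 𝕜) • V f) : 𝕜) := by
      rw [inner_smul_right, RCLike.re_ofReal_mul]
      have h4 : RCLike.re (inner 𝕜 f (V f) : 𝕜) = RCLike.re (inner 𝕜 (V f) f : 𝕜) :=
        inner_re_symm _ _
      rw [h4]
      exact mul_nonneg hc.le (hkey f)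
    nlinarith [norm_nonneg (T f), norm_nonneg f, sq_nonneg ‖(c : 𝕜) • V f‖]
  refine ⟨part1, ?_⟩
  have anti : AntilipschitzWith 1 T :=
    T.antilipschitz_of_bound (fun x => by simpa using part1 x)
  have hker : T.ker = ⊥ := LinearMap.ker_eq_bot.mpr anti.injective
  have hclosed : IsClosed (Set.range T) := anti.isClosed_range T.uniformContinuous
  have hdense : (T.range)ᗮ = ⊥ := by
    rw [Submodule.eq_bot_iff]
    intro g hg
    have h0 : (inner 𝕜 (T g) g : 𝕜) = 0 :=
      (Submodule.mem_orthogonal _ _).mp hg (T g) (LinearMap.mem_range_self _ g)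
    have hexp : (inner 𝕜 (T g) g : 𝕜)
        = inner 𝕜 g g + conj ((c : 𝕜)) * inner 𝕜 (V g) g := by
      rw [hTapp, inner_add_left, inner_smul_left]
    rw [hexp] at h0
    have hre := congrArg RCLike.re h0
    rw [map_add, RCLike.conj_ofReal, RCLike.re_ofReal_mul, map_zero] at hre
    have hself : RCLike.re (inner 𝕜 g g : 𝕜) = ‖g‖ ^ 2 := inner_self_eq_norm_sq g
    rw [hself] at hre
    have hnn := hkey g
    have : ‖g‖ = 0 := by nlinarith [norm_nonneg g]
    exact norm_eq_zero.mp this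
  have hrange : T.range = ⊤ := by
    have htop : (T.range).topologicalClosure = ⊤ :=
      Submodule.topologicalClosure_eq_top_iff.mpr hdense
    have hcl : (T.range).topologicalClosure = T.range :=
      IsClosed.submodule_topologicalClosure_eq hclosed
    rw [← hcl, htop]
  let e := ContinuousLinearEquiv.ofBijective T hker hrange
  refine ⟨(e.symm : Lp 𝕜 2 μ01 →L[𝕜] Lp 𝕜 2 μ01), ?_, ?_, ?_⟩
  · ext x
    have : e.symm (e x) = x := e.symm_apply_apply x
    simpa [ContinuousLinearMap.mul_apply, e] using this
  · ext x
    have : e (e.symm x) = x := e.apply_symm_apply x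
    simpa [ContinuousLinearMap.mul_apply, e] using this
  · refine ContinuousLinearMap.opNorm_le_bound _ zero_le_one fun g => ?_
    have hTe : T (e.symm g) = g := by
      have : e (e.symm g) = g := e.apply_symm_apply g
      simpa [e] using this
    calc ‖(e.symm : Lp 𝕜 2 μ01 →L[𝕜] Lp 𝕜 2 μ01) g‖
        ≤ ‖T (e.symm g)‖ := part1 _
      _ = ‖g‖ := by rw [hTe]
      _ = 1 * ‖g‖ := (one_mul _).symm
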